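/- Let s > 1 and take π_i = 1 for all i. If η₂ := min_{i=1,…,n} ( a_{ii} − (1/(2(s+1))) Σ_{j=1, j≠i}^n ( s(a_{ij} + a_{ji}) − 2√(a_{ij} a_{ji}) ) ) > 0, then for every z ∈ ℝ^n and every u ∈ (0,∞)^n, zᵀ H(u) A(u) z ≥ s Σ_{i=1}^n a_{i0} u_i^{s-2} z_i² + η₂ s(s+1) Σ_{i=1}^n u_i^{2(s-1)} z_i². -/

import Mathlib

open Finset Real

noncomputable section

/-- The diffusion matrix `A(u)`: `A_{ij}(u) = δ_{ij}(a_{i0} + Σ_k a_{ik} u_k^s) + s a_{ij} u_i u_j^{s-1}`. -/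
def matA (n : ℕ) (s : ℝ) (a0 : Fin n → ℝ) (a : Fin n → Fin n → ℝ) (u : Fin n → ℝ) :
    Matrix (Fin n) (Fin n) ℝ :=
  Matrix.of fun i j =>
    (if i = j then a0 i + ∑ k, a i k * u k ^ s else 0) + s * a i j * u i * u j ^ (s - 1)

/-- The entropy Hessian `H(u)`: `H_{ij}(u) = δ_{ij} s π_i u_i^{s-2}`. -/
def matH (n : ℕ) (s : ℝ) (P : Fin n → ℝ) (u : Fin n → ℝ) : Matrix (Fin n) (Fin n) ℝ :=
  Matrix.of fun i j => if i = j then s * P i * u i ^ (s - 2) else 0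

/-- The quadratic form `zᵀ M z`. -/
def quad (n : ℕ) (M : Matrix (Fin n) (Fin n) ℝ) (z : Fin n → ℝ) : ℝ :=
  ∑ i, ∑ j, z i * M i j * z j

lemma pair_ineq (s p q t X Y : ℝ) (hs : 1 ≤ s) (hp : 0 ≤ p) (hq : 0 ≤ q) (ht : 0 < t) :
    0 ≤ p*t*X^2 + q*Y^2/t + s*(p+q)*(X*Y) + (s*(p+q)/2 - Real.sqrt (p*q))*(X^2+Y^2) := by
  have hA2 : (Real.sqrt (p*t))^2 = p*t := Real.sq_sqrt (mul_nonneg hp ht.le)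
  have hB2 : (Real.sqrt (q/t))^2 = q/t := Real.sq_sqrt (div_nonneg hq ht.le)
  have hAB : Real.sqrt (p*t) * Real.sqrt (q/t) = Real.sqrt (p*q) := by
    rw [← Real.sqrt_mul (mul_nonneg hp ht.le)]
    congr 1
    field_simp
  have e1 : (Real.sqrt (p*t)*|X|)^2 = p*t*X^2 := by rw [mul_pow, hA2, sq_abs]
  have e2 : (Real.sqrt (q/t)*|Y|)^2 = q*Y^2/t := by rw [mul_pow, hB2, sq_abs]; ring
  have e3 : (Real.sqrt (p*t)*|X|) * (Real.sqrt (q/t)*|Y|) = Real.sqrt (p*q) * |X*Y| := by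
    rw [abs_mul]
    linear_combination (|X| * |Y|) * hAB
  have h1 : 2*Real.sqrt (p*q)*|X*Y| ≤ p*t*X^2 + q*Y^2/t := by
    nlinarith [sq_nonneg (Real.sqrt (p*t)*|X| - Real.sqrt (q/t)*|Y|), e1, e2, e3]
  have hsp : Real.sqrt p ^ 2 = p := Real.sq_sqrt hp
  have hsq : Real.sqrt q ^ 2 = q := Real.sq_sqrt hq
  have hr : Real.sqrt (p*q) = Real.sqrt p * Real.sqrt q := Real.sqrt_mul hp q
  have hc : Real.sqrt (p*q) ≤ s*(p+q)/2 := by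
    nlinarith [sq_nonneg (Real.sqrt p - Real.sqrt q), Real.sqrt_nonneg p, Real.sqrt_nonneg q]
  have habs2 : 2*|X*Y| ≤ X^2+Y^2 := by
    nlinarith [sq_nonneg (|X|-|Y|), sq_abs X, sq_abs Y, abs_mul X Y]
  have hK : (0:ℝ) ≤ s*(p+q) := by nlinarith
  linarith [h1,
    mul_nonneg (sub_nonneg.2 hc) (by linarith : (0:ℝ) ≤ X^2+Y^2-2*|X*Y|),
    mul_nonneg hK (by linarith [neg_le_abs (X*Y)] : (0:ℝ) ≤ X*Y + |X*Y|)]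

lemma aux1 (s c v w zi : ℝ) (hv : 0 < v) (hw : 0 < w) :
    c*(w^s/v^s)*(v^(s-1)*zi)^2 = c*(v^(s-2)*w^s*zi^2) := by
  have h1 : (v^(s-1))^2 = v^(2*(s-1)) := by
    rw [← Real.rpow_natCast (v ^ (s-1)) 2, ← Real.rpow_mul hv.le]
    congr 1
    push_cast
    ring
  have h2 : v^(s-2)*v^s = v^(2*(s-1)) := by
    rw [← Real.rpow_add hv]
    congr 1
    ring
  have hvs : v^s ≠ 0 := (Real.rpow_pos_of_pos hv s).ne'
  rw [mul_pow, h1, ← h2, div_eq_mul_inv]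
  have hinv := mul_inv_cancel₀ hvs
  linear_combination (c*w^s*v^(s-2)*zi^2) * hinv

lemma offdiag_ineq (s p q v w zi zj : ℝ) (hs : 1 ≤ s) (hp : 0 ≤ p) (hq : 0 ≤ q)
    (hv : 0 < v) (hw : 0 < w) :
    0 ≤ (s/2)*(s*(p+q) - 2*Real.sqrt (p*q))*((v^(s-1)*zi)^2 + (w^(s-1)*zj)^2)
       + (s*(p*(v^(s-2)*w^s*zi^2)) + s*(q*(w^(s-2)*v^s*zj^2)))
       + (s^2*(p*((v^(s-1)*zi)*(w^(s-1)*zj))) + s^2*(q*((v^(s-1)*zi)*(w^(s-1)*zj)))) := by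
  have hvs : (0:ℝ) < v^s := Real.rpow_pos_of_pos hv s
  have hws : (0:ℝ) < w^s := Real.rpow_pos_of_pos hw s
  have ht : (0:ℝ) < w^s/v^s := div_pos hws hvs
  have h := pair_ineq s p q (w^s/v^s) (v^(s-1)*zi) (w^(s-1)*zj) hs hp hq ht
  have gA : p*(w^s/v^s)*(v^(s-1)*zi)^2 = p*(v^(s-2)*w^s*zi^2) := aux1 s p v w zi hv hw
  have gB : q*(w^(s-1)*zj)^2/(w^s/v^s) = q*(w^(s-2)*v^s*zj^2) := by
    rw [div_div_eq_mul_div]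
    calc q*(w^(s-1)*zj)^2*v^s/w^s = q*(v^s/w^s)*(w^(s-1)*zj)^2 := by ring
      _ = q*(w^(s-2)*v^s*zj^2) := aux1 s q w v zj hw hv
  have h' := mul_nonneg (by linarith : (0:ℝ) ≤ s) h
  calc (0:ℝ) ≤ s * (p*(w^s/v^s)*(v^(s-1)*zi)^2 + q*(w^(s-1)*zj)^2/(w^s/v^s)
        + s*(p+q)*((v^(s-1)*zi)*(w^(s-1)*zj))
        + (s*(p+q)/2 - Real.sqrt (p*q))*((v^(s-1)*zi)^2+(w^(s-1)*zj)^2)) := h'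
    _ = _ := by rw [gA, gB]; ring

theorem stmt9 (n : ℕ) [NeZero n] (s : ℝ) (hs : 1 < s)
    (a0 : Fin n → ℝ) (a : Fin n → Fin n → ℝ)
    (ha0 : ∀ i, 0 ≤ a0 i) (ha : ∀ i j, 0 ≤ a i j)
    (η2 : ℝ)
    (hη2 : η2 = Finset.univ.inf' Finset.univ_nonempty
      (fun i => a i i - 1 / (2 * (s + 1)) * ∑ j ∈ Finset.univ.erase i,
        (s * (a i j + a j i) - 2 * Real.sqrt (a i j * a j i))))
    (hpos : 0 < η2) :
    ∀ (z u : Fin n → ℝ), (∀ i, 0 < u i) →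
      s * ∑ i, a0 i * u i ^ (s - 2) * z i ^ 2
        + η2 * (s * (s + 1)) * ∑ i, u i ^ (2 * (s - 1)) * z i ^ 2
      ≤ quad n (matH n s (fun _ => 1) u * matA n s a0 a u) z := by
  intro z u hu
  have hs0 : (0:ℝ) < s := by linarith
  -- abbreviations
  set X : Fin n → ℝ := fun i => u i ^ (s-1) * z i with hX
  set D : Fin n → Fin n → ℝ :=
    fun i j => s * (a i j + a j i) - 2 * Real.sqrt (a i j * a j i) with hD
  set w : Fin n → Fin n → ℝ :=
    fun i j => s*(a i j*(u i^(s-2)*u j^s*z i^2)) + s^2*(a i j*(X i*X j)) with hw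
  -- rpow identities
  have e1 : ∀ i, u i ^ (s-2) * u i = u i ^ (s-1) := by
    intro i
    have h : s - 2 + 1 = s - 1 := by ring
    rw [← h, Real.rpow_add_one (hu i).ne']
  have e2 : ∀ i, (u i ^ (s-1))^2 = u i ^ (2*(s-1)) := by
    intro i
    rw [← Real.rpow_natCast (u i ^ (s-1)) 2, ← Real.rpow_mul (hu i).le]
    congr 1
    push_cast
    ring
  have e3 : ∀ i, u i ^ (s-2) * u i ^ s = u i ^ (2*(s-1)) := by
    intro i
    rw [← Real.rpow_add (hu i)]
    congr 1
    ring
  -- the product matrix entries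
  have hmul : ∀ i j, (matH n s (fun _ => 1) u * matA n s a0 a u) i j
      = s * u i ^ (s-2) *
        ((if i = j then a0 i + ∑ k, a i k * u k ^ s else 0) + s * a i j * u i * u j ^ (s-1)) := by
    intro i j
    rw [Matrix.mul_apply]
    simp only [matH, matA, Matrix.of_apply, ite_mul, zero_mul]
    rw [Finset.sum_ite_eq]
    simp
  -- quad as explicit sums
  have hquad : quad n (matH n s (fun _ => 1) u * matA n s a0 a u) z
      = s * ∑ i, a0 i * u i ^ (s - 2) * z i ^ 2 + ∑ i, ∑ j, w i j := by
    unfold quad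
    calc ∑ i, ∑ j, z i * (matH n s (fun _ => 1) u * matA n s a0 a u) i j * z j
        = ∑ i, ∑ j, ((if i = j then s * u i ^ (s-2) * (a0 i + ∑ k, a i k * u k ^ s) * z i ^ 2 else 0)
            + s^2*(a i j*((u i ^ (s-2) * u i)*u j^(s-1)*(z i*z j)))) := by
          refine Finset.sum_congr rfl fun i _ => Finset.sum_congr rfl fun j _ => ?_
          rw [hmul i j]
          rcases eq_or_ne i j with rfl | hij
          · rw [if_pos rfl, if_pos rfl]; ring
          · rw [if_neg hij, if_neg hij]; ring
      _ = ∑ i, (s * u i ^ (s-2) * (a0 i + ∑ k, a i k * u k ^ s) * z i ^ 2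
            + ∑ j, s^2*(a i j*((u i ^ (s-2) * u i)*u j^(s-1)*(z i*z j)))) := by
          refine Finset.sum_congr rfl fun i _ => ?_
          rw [Finset.sum_add_distrib, Finset.sum_ite_eq]
          simp
      _ = ∑ i, (s * (a0 i * u i ^ (s - 2) * z i ^ 2) + ∑ j, w i j) := by
          refine Finset.sum_congr rfl fun i _ => ?_
          have hsplit : s * u i ^ (s-2) * (a0 i + ∑ k, a i k * u k ^ s) * z i ^ 2
              = s * (a0 i * u i ^ (s - 2) * z i ^ 2)
                + ∑ k, s*(a i k*(u i^(s-2)*u k^s*z i^2)) := by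
            rw [mul_add, add_mul]
            congr 1
            · ring
            · rw [Finset.mul_sum, Finset.sum_mul]
              exact Finset.sum_congr rfl fun k _ => by ring
          rw [hsplit, add_assoc, ← Finset.sum_add_distrib]
          congr 1
          refine Finset.sum_congr rfl fun j _ => ?_
          simp only [hw, hX]
          rw [e1 i]
          ring
      _ = s * ∑ i, a0 i * u i ^ (s - 2) * z i ^ 2 + ∑ i, ∑ j, w i j := by
          rw [Finset.sum_add_distrib, Finset.mul_sum]
  rw [hquad]
  refine add_le_add (le_refl _) ?_
  -- main inequality
  have hηi : ∀ i, η2 ≤ a i i - 1/(2*(s+1)) * ∑ j ∈ Finset.univ.erase i, D i j := by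
    intro i
    rw [hη2]
    exact Finset.inf'_le _ (Finset.mem_univ i)
  have hdiagw : ∀ i, w i i = s*(a i i*(X i)^2) + s^2*(a i i*(X i)^2) := by
    intro i
    simp only [hw, hX]
    rw [e3 i, ← e2 i]
    ring
  -- key positivity
  have hS : 0 ≤ ∑ i, ∑ j ∈ Finset.univ.erase i, ((s/2)*D i j*(X i)^2 + w i j) := by
    set G : Fin n → Fin n → ℝ :=
      fun i j => if i = j then 0 else (s/2)*D i j*(X i)^2 + w i j with hG
    have hBG : ∀ i, ∑ j ∈ Finset.univ.erase i, ((s/2)*D i j*(X i)^2 + w i j) = ∑ j, G i j := by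
      intro i
      rw [← Finset.add_sum_erase _ (G i) (Finset.mem_univ i)]
      have hGii : G i i = 0 := if_pos rfl
      rw [hGii, zero_add]
      refine Finset.sum_congr rfl fun j hj => ?_
      exact (if_neg (Finset.ne_of_mem_erase hj).symm).symm
    have hpt : ∀ i j, 0 ≤ G i j + G j i := by
      intro i j
      rcases eq_or_ne i j with rfl | hij
      · simp [hG]
      · rw [hG]
        simp only [if_neg hij, if_neg hij.symm]
        have hod := offdiag_ineq s (a i j) (a j i) (u i) (u j) (z i) (z j)
          hs.le (ha i j) (ha j i) (hu i) (hu j)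
        have hsqrt : Real.sqrt (a j i * a i j) = Real.sqrt (a i j * a j i) := by rw [mul_comm]
        calc (0:ℝ) ≤ _ := hod
          _ = ((s/2)*D i j*(X i)^2 + w i j) + ((s/2)*D j i*(X j)^2 + w j i) := by
            simp only [hw, hD, hX]
            rw [hsqrt]
            ring
    have h2 : 0 ≤ ∑ i, ∑ j, (G i j + G j i) :=
      Finset.sum_nonneg fun i _ => Finset.sum_nonneg fun j _ => hpt i j
    have hsw : ∑ i, ∑ j, G j i = ∑ i, ∑ j, G i j := Finset.sum_comm
    have hsplit : ∑ i, ∑ j, (G i j + G j i) = ∑ i, ∑ j, G i j + ∑ i, ∑ j, G j i := by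
      rw [← Finset.sum_add_distrib]
      exact Finset.sum_congr rfl fun i _ => by rw [← Finset.sum_add_distrib]
    rw [hsplit, hsw] at h2
    calc (0:ℝ) ≤ (∑ i, ∑ j, G i j) := by linarith
      _ = ∑ i, ∑ j ∈ Finset.univ.erase i, ((s/2)*D i j*(X i)^2 + w i j) :=
          (Finset.sum_congr rfl fun i _ => (hBG i)).symm
  -- assemble
  have hxsq : ∀ i, u i ^ (2*(s-1)) * z i ^ 2 = (X i)^2 := by
    intro i
    simp only [hX]
    rw [mul_pow, e2 i]
  calc η2 * (s * (s + 1)) * ∑ i, u i ^ (2 * (s - 1)) * z i ^ 2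
      = ∑ i, η2 * ((s * (s + 1)) * (X i)^2) := by
        rw [Finset.mul_sum]
        exact Finset.sum_congr rfl fun i _ => by rw [← hxsq i]; ring
    _ ≤ ∑ i, (a i i - 1/(2*(s+1)) * ∑ j ∈ Finset.univ.erase i, D i j) * ((s * (s + 1)) * (X i)^2) := by
        have hK : (0:ℝ) ≤ s * (s + 1) := by nlinarith
        exact Finset.sum_le_sum fun i _ =>
          mul_le_mul_of_nonneg_right (hηi i) (mul_nonneg hK (sq_nonneg _))
    _ ≤ ∑ i, ∑ j, w i j := by
        have hs1 : s + 1 ≠ 0 := by linarith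
        have hper : ∀ i, (a i i - 1/(2*(s+1)) * ∑ j ∈ Finset.univ.erase i, D i j) * ((s * (s + 1)) * (X i)^2)
            = (s*(a i i*(X i)^2) + s^2*(a i i*(X i)^2))
              - ∑ j ∈ Finset.univ.erase i, ((s/2)*D i j*(X i)^2) := by
          intro i
          have h1 : (1/(2*(s+1)) * ∑ j ∈ Finset.univ.erase i, D i j) * ((s * (s + 1)) * (X i)^2)
              = ∑ j ∈ Finset.univ.erase i, ((s/2)*D i j*(X i)^2) := by
            rw [Finset.mul_sum, Finset.sum_mul]
            refine Finset.sum_congr rfl fun j _ => ?_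
            field_simp
          rw [sub_mul, h1]
          ring
        have hre : ∀ i, ∑ j, w i j
            = (s*(a i i*(X i)^2) + s^2*(a i i*(X i)^2)) + ∑ j ∈ Finset.univ.erase i, w i j := by
          intro i
          rw [← Finset.add_sum_erase _ (w i) (Finset.mem_univ i), hdiagw i]
        have key : ∑ i, ∑ j, w i j
            - ∑ i, ((a i i - 1/(2*(s+1)) * ∑ j ∈ Finset.univ.erase i, D i j) * ((s * (s + 1)) * (X i)^2))
            = ∑ i, ∑ j ∈ Finset.univ.erase i, ((s/2)*D i j*(X i)^2 + w i j) := by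
          rw [← Finset.sum_sub_distrib]
          refine Finset.sum_congr rfl fun i _ => ?_
          have hsp2 : ∑ j ∈ Finset.univ.erase i, ((s/2)*D i j*(X i)^2 + w i j)
              = (∑ j ∈ Finset.univ.erase i, ((s/2)*D i j*(X i)^2))
                + ∑ j ∈ Finset.univ.erase i, w i j := Finset.sum_add_distrib
          rw [hper i, hre i, hsp2]
          ring
        linarith [hS, key]
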